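/- Let N, M be positive integers, v ∈ ℂ^N with |v_n| = 1 for every n, β ∈ ℂ, u ∈ ℂ^M, and g ∈ ℂ^M. Then the maximum over unit-norm vectors w ∈ ℂ^N of |g^H (β u v^H) w|² equals N·|β|²·|g^H u|², and it is attained at w = v/√N. In particular, the maximum value does not depend on v (beyond its entries having unit modulus). -/

import Mathlib

/-- Far-field result: for a rank-one channel `β u v^H` with `|v_n| = 1` for all `n`,
the maximum over unit-norm `w` of `|g^H (β u v^H) w|²` equals `N |β|² |g^H u|²`
(independently of `v`), and it is attained at `w = v/√N`. -/
theorem far_field_no_ma_gain (N M : ℕ) (hN : 0 < N) (hM : 0 < M)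
    (v : Fin N → ℂ) (hv : ∀ n, ‖v n‖ = 1)
    (β : ℂ) (u g : Fin M → ℂ) :
    IsGreatest
      {x : ℝ | ∃ w : EuclideanSpace ℂ (Fin N), ‖w‖ = 1 ∧
        x = ‖β * (∑ m, (starRingEnd ℂ) (g m) * u m) *
              (∑ n, (starRingEnd ℂ) (v n) * w n)‖ ^ 2}
      ((N : ℝ) * ‖β‖ ^ 2 * ‖∑ m, (starRingEnd ℂ) (g m) * u m‖ ^ 2) ∧
    (‖((WithLp.equiv 2 (Fin N → ℂ)).symm
          (fun n => v n / ((Real.sqrt N : ℝ) : ℂ)) : EuclideanSpace ℂ (Fin N))‖ = 1 ∧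
      ‖β * (∑ m, (starRingEnd ℂ) (g m) * u m) *
          (∑ n, (starRingEnd ℂ) (v n) * (v n / ((Real.sqrt N : ℝ) : ℂ)))‖ ^ 2
        = (N : ℝ) * ‖β‖ ^ 2 *
            ‖∑ m, (starRingEnd ℂ) (g m) * u m‖ ^ 2) := by
  have hNpos : (0:ℝ) < N := by exact_mod_cast hN
  have hsN : (0:ℝ) < Real.sqrt N := Real.sqrt_pos.mpr hNpos
  have hsq : Real.sqrt N ^ 2 = N := Real.sq_sqrt hNpos.le
  set G : ℂ := ∑ m, (starRingEnd ℂ) (g m) * u m with hG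
  set V : EuclideanSpace ℂ (Fin N) := (WithLp.equiv 2 (Fin N → ℂ)).symm v with hV
  have hVnorm : ‖V‖ = Real.sqrt N := by
    rw [EuclideanSpace.norm_eq]
    congr 1
    simp [hV, hv]
  -- value at the witness
  have hterm : ∀ n, (starRingEnd ℂ) (v n) * (v n / ((Real.sqrt N : ℝ) : ℂ))
      = 1 / ((Real.sqrt N : ℝ) : ℂ) := by
    intro n
    rw [mul_div_assoc', ← Complex.normSq_eq_conj_mul_self]
    norm_cast
    rw [Complex.normSq_eq_norm_sq, hv, one_pow]
  have hsum : (∑ n, (starRingEnd ℂ) (v n) * (v n / ((Real.sqrt N : ℝ) : ℂ)))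
      = ((N / Real.sqrt N : ℝ) : ℂ) := by
    rw [Finset.sum_congr rfl (fun n _ => hterm n), Finset.sum_const, Finset.card_univ,
      Fintype.card_fin]
    push_cast
    ring
  have hvalue : ‖β * G * (∑ n, (starRingEnd ℂ) (v n) *
        (v n / ((Real.sqrt N : ℝ) : ℂ)))‖ ^ 2
      = (N : ℝ) * ‖β‖ ^ 2 * ‖G‖ ^ 2 := by
    rw [hsum, norm_mul, norm_mul,
      Complex.norm_of_nonneg (div_pos hNpos hsN).le]
    rw [mul_pow, mul_pow, div_pow, hsq]
    field_simp
  have hwnorm : ‖((WithLp.equiv 2 (Fin N → ℂ)).symm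
      (fun n => v n / ((Real.sqrt N : ℝ) : ℂ)) : EuclideanSpace ℂ (Fin N))‖ = 1 := by
    rw [EuclideanSpace.norm_eq]
    have hterm2 : ∀ n : Fin N,
        ‖((WithLp.equiv 2 (Fin N → ℂ)).symm
          (fun n => v n / ((Real.sqrt N : ℝ) : ℂ)) : EuclideanSpace ℂ (Fin N)) n‖ ^ 2
          = 1 / N := by
      intro n
      rw [WithLp.equiv_symm_apply, PiLp.toLp_apply]
      rw [norm_div, hv, Complex.norm_of_nonneg hsN.le, div_pow, one_pow, hsq]
    rw [Finset.sum_congr rfl (fun n _ => hterm2 n), Finset.sum_const, Finset.card_univ,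
      Fintype.card_fin, nsmul_eq_mul, mul_one_div, div_self hNpos.ne',
      Real.sqrt_one]
  refine ⟨⟨⟨(WithLp.equiv 2 (Fin N → ℂ)).symm
      (fun n => v n / ((Real.sqrt N : ℝ) : ℂ)), hwnorm, hvalue.symm⟩, ?_⟩, hwnorm, hvalue⟩
  · -- upper bound
    rintro x ⟨w, hw, rfl⟩
    have hinner : (∑ n, (starRingEnd ℂ) (v n) * w n) = inner ℂ V w := by
      simp [PiLp.inner_apply, hV, RCLike.inner_apply, mul_comm]
    have hle : ‖∑ n, (starRingEnd ℂ) (v n) * w n‖ ≤ Real.sqrt N := by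
      rw [hinner]
      calc ‖(inner ℂ V w : ℂ)‖ ≤ ‖V‖ * ‖w‖ := by
            exact norm_inner_le_norm (𝕜 := ℂ) V w
        _ = Real.sqrt N := by rw [hVnorm, hw, mul_one]
    rw [norm_mul, norm_mul]
    calc (‖β‖ * ‖G‖ *
          ‖∑ n, (starRingEnd ℂ) (v n) * w n‖) ^ 2
        ≤ (‖β‖ * ‖G‖ * Real.sqrt N) ^ 2 := by
          apply pow_le_pow_left₀ (by positivity)
          exact mul_le_mul_of_nonneg_left hle (by positivity)
      _ = (N : ℝ) * ‖β‖ ^ 2 * ‖G‖ ^ 2 := by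
          rw [mul_pow, mul_pow, hsq]; ring
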